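/- arXiv:2112.01602 — 4 statements merged into one kernel-verified Lean document; each statement's English description precedes it below -/
import Mathlib

section
/- Let 0 < ω < K. For the triangular characteristic v_e, the constant β₀ := − (∫₀^{2π} (v_e(σ) − ω/K) dσ) / (∫₀^{2π} |v_e(σ) − ω/K| dσ) equals 2ωK/(ω² + K²), and in particular 0 < β₀ ≤ 1. -/
set_option maxHeartbeats 1000000

open Real MeasureTheory

lemma lin_int (m q a b : ℝ) :
    (∫ x in a..b, (m * x + q)) = m * (b^2 - a^2) / 2 + q * (b - a) := by
  have hcont : Continuous fun x : ℝ => m * x := by fun_prop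
  rw [intervalIntegral.integral_add (hcont.intervalIntegrable _ _)
      (intervalIntegrable_const),
    intervalIntegral.integral_const_mul, integral_id, intervalIntegral.integral_const]
  simp; ring

lemma intv_int_of_eqOn {f g : ℝ → ℝ} {a b : ℝ} (h : Set.EqOn f g (Set.uIcc a b))
    (hg : Continuous g) : IntervalIntegrable f volume a b :=
  (hg.intervalIntegrable a b).congr
    (fun x hx => (h (Set.uIoc_subset_uIcc hx)).symm)

/-- For the triangular characteristic, the constant β₀ equals 2ωK/(ω²+K²),
and 0 < β₀ ≤ 1. -/
theorem beta0_value (v : ℝ → ℝ)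
    (hper : ∀ θ : ℝ, v (θ + 2*π) = v θ)
    (hA : ∀ θ : ℝ, -(π/2) ≤ θ → θ < π/2 → v θ = (2/π)*θ)
    (hB : ∀ θ : ℝ, π/2 ≤ θ → θ < 3*π/2 → v θ = -(2/π)*θ + 2)
    (K ω : ℝ) (hK : 0 < K) (hω0 : 0 < ω) (hωK : ω < K) :
    -(∫ σ in (0:ℝ)..(2*π), (v σ - ω/K)) / (∫ σ in (0:ℝ)..(2*π), |v σ - ω/K|)
      = 2*ω*K/(ω^2 + K^2) ∧
    0 < 2*ω*K/(ω^2 + K^2) ∧ 2*ω*K/(ω^2 + K^2) ≤ 1 := by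
  have hπ : (0:ℝ) < π := Real.pi_pos
  have hπ' : (π:ℝ) ≠ 0 := ne_of_gt hπ
  set c : ℝ := ω / K with hc
  have hc0 : 0 < c := div_pos hω0 hK
  have hc1 : c < 1 := (div_lt_one hK).2 hωK
  -- closed-interval descriptions of v
  have lemA : ∀ θ : ℝ, -(π/2) ≤ θ → θ ≤ π/2 → v θ = (2/π)*θ := by
    intro θ h1 h2
    rcases lt_or_eq_of_le h2 with h | h
    · exact hA θ h1 h
    · rw [h, hB (π/2) le_rfl (by linarith)]; field_simp; ring
  have lemB : ∀ θ : ℝ, π/2 ≤ θ → θ ≤ 3*π/2 → v θ = -(2/π)*θ + 2 := by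
    intro θ h1 h2
    rcases lt_or_eq_of_le h2 with h | h
    · exact hB θ h1 h
    · rw [h]
      have := hper (-(π/2))
      have hval : v (3*π/2) = v (-(π/2)) := by
        rw [← this]; ring_nf
      rw [hval, hA (-(π/2)) le_rfl (by linarith)]
      field_simp; ring
  have lemC : ∀ θ : ℝ, 3*π/2 ≤ θ → θ ≤ 2*π → v θ = (2/π)*θ - 4 := by
    intro θ h1 h2
    have hval : v θ = v (θ - 2*π) := by
      have := hper (θ - 2*π); rw [← this]; ring_nf
    rw [hval, hA (θ - 2*π) (by linarith) (by linarith)]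
    field_simp; ring
  -- breakpoints
  have hb1 : (0:ℝ) ≤ c*π/2 := by positivity
  have hb2 : c*π/2 ≤ π/2 := by nlinarith
  have hb3 : (π/2 : ℝ) ≤ (2-c)*π/2 := by nlinarith
  have hb4 : ((2-c)*π/2 : ℝ) ≤ 3*π/2 := by nlinarith
  have hb5 : (3*π/2 : ℝ) ≤ 2*π := by nlinarith
  -- integral of v over the three pieces
  have e1 : Set.EqOn v (fun θ => (2/π)*θ + 0) (Set.uIcc 0 (π/2)) := by
    intro x hx
    rw [Set.uIcc_of_le (by linarith)] at hx
    simp only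
    rw [lemA x (by linarith [hx.1]) hx.2]; ring
  have e2 : Set.EqOn v (fun θ => -(2/π)*θ + 2) (Set.uIcc (π/2) (3*π/2)) := by
    intro x hx
    rw [Set.uIcc_of_le (by linarith)] at hx
    exact lemB x hx.1 hx.2
  have e3 : Set.EqOn v (fun θ => (2/π)*θ + (-4)) (Set.uIcc (3*π/2) (2*π)) := by
    intro x hx
    rw [Set.uIcc_of_le (by linarith)] at hx
    simp only
    rw [lemC x hx.1 hx.2]; ring
  have i1 : IntervalIntegrable v volume 0 (π/2) := intv_int_of_eqOn e1 (by fun_prop)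
  have i2 : IntervalIntegrable v volume (π/2) (3*π/2) := intv_int_of_eqOn e2 (by fun_prop)
  have i3 : IntervalIntegrable v volume (3*π/2) (2*π) := intv_int_of_eqOn e3 (by fun_prop)
  have iv : IntervalIntegrable v volume 0 (2*π) := (i1.trans i2).trans i3
  have intv : (∫ σ in (0:ℝ)..(2*π), v σ) = 0 := by
    rw [← intervalIntegral.integral_add_adjacent_intervals (i1.trans i2) i3,
        ← intervalIntegral.integral_add_adjacent_intervals i1 i2,
        intervalIntegral.integral_congr e1, intervalIntegral.integral_congr e2,
        intervalIntegral.integral_congr e3, lin_int, lin_int, lin_int]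
    field_simp; ring
  -- numerator
  have num : (∫ σ in (0:ℝ)..(2*π), (v σ - c)) = -(2*π*c) := by
    rw [intervalIntegral.integral_sub iv intervalIntegrable_const, intv,
        intervalIntegral.integral_const]
    simp only [smul_eq_mul]; ring
  -- abs pieces
  have f1 : Set.EqOn (fun σ => |v σ - c|) (fun θ => (-(2/π))*θ + c) (Set.uIcc 0 (c*π/2)) := by
    intro x hx
    rw [Set.uIcc_of_le hb1] at hx
    simp only
    rw [lemA x (by linarith [hx.1]) (by linarith [hx.2]), abs_of_nonpos]
    · ring
    · have : (2/π)*x ≤ c := by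
        rw [div_mul_eq_mul_div, div_le_iff₀ hπ]; nlinarith [hx.2]
      linarith
  have f2 : Set.EqOn (fun σ => |v σ - c|) (fun θ => (2/π)*θ + (-c)) (Set.uIcc (c*π/2) (π/2)) := by
    intro x hx
    rw [Set.uIcc_of_le hb2] at hx
    simp only
    rw [lemA x (by linarith [hx.1]) hx.2, abs_of_nonneg]
    · ring
    · have : c ≤ (2/π)*x := by
        rw [div_mul_eq_mul_div, le_div_iff₀ hπ]; nlinarith [hx.1]
      linarith
  have f3 : Set.EqOn (fun σ => |v σ - c|) (fun θ => (-(2/π))*θ + (2-c))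
      (Set.uIcc (π/2) ((2-c)*π/2)) := by
    intro x hx
    rw [Set.uIcc_of_le hb3] at hx
    simp only
    rw [lemB x hx.1 (by linarith [hx.2]), abs_of_nonneg]
    · ring
    · have : (2/π)*x ≤ 2 - c := by
        rw [div_mul_eq_mul_div, div_le_iff₀ hπ]; nlinarith [hx.2]
      linarith
  have f4 : Set.EqOn (fun σ => |v σ - c|) (fun θ => (2/π)*θ + (-(2-c)))
      (Set.uIcc ((2-c)*π/2) (3*π/2)) := by
    intro x hx
    rw [Set.uIcc_of_le hb4] at hx
    simp only
    rw [lemB x (by linarith [hx.1]) hx.2, abs_of_nonpos]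
    · ring
    · have : 2 - c ≤ (2/π)*x := by
        rw [div_mul_eq_mul_div, le_div_iff₀ hπ]; nlinarith [hx.1]
      linarith
  have f5 : Set.EqOn (fun σ => |v σ - c|) (fun θ => (-(2/π))*θ + (4+c))
      (Set.uIcc (3*π/2) (2*π)) := by
    intro x hx
    rw [Set.uIcc_of_le hb5] at hx
    simp only
    rw [lemC x hx.1 hx.2, abs_of_nonpos]
    · ring
    · have : (2/π)*x ≤ 4 + c := by
        rw [div_mul_eq_mul_div, div_le_iff₀ hπ]; nlinarith [hx.2]
      linarith
  have j1 : IntervalIntegrable (fun σ => |v σ - c|) volume 0 (c*π/2) :=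
    intv_int_of_eqOn f1 (by fun_prop)
  have j2 : IntervalIntegrable (fun σ => |v σ - c|) volume (c*π/2) (π/2) :=
    intv_int_of_eqOn f2 (by fun_prop)
  have j3 : IntervalIntegrable (fun σ => |v σ - c|) volume (π/2) ((2-c)*π/2) :=
    intv_int_of_eqOn f3 (by fun_prop)
  have j4 : IntervalIntegrable (fun σ => |v σ - c|) volume ((2-c)*π/2) (3*π/2) :=
    intv_int_of_eqOn f4 (by fun_prop)
  have j5 : IntervalIntegrable (fun σ => |v σ - c|) volume (3*π/2) (2*π) :=
    intv_int_of_eqOn f5 (by fun_prop)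
  have den : (∫ σ in (0:ℝ)..(2*π), |v σ - c|) = π * (1 + c^2) := by
    rw [← intervalIntegral.integral_add_adjacent_intervals
          ((((j1.trans j2).trans j3).trans j4)) j5,
        ← intervalIntegral.integral_add_adjacent_intervals (((j1.trans j2)).trans j3) j4,
        ← intervalIntegral.integral_add_adjacent_intervals (j1.trans j2) j3,
        ← intervalIntegral.integral_add_adjacent_intervals j1 j2,
        intervalIntegral.integral_congr f1, intervalIntegral.integral_congr f2,
        intervalIntegral.integral_congr f3, intervalIntegral.integral_congr f4,
        intervalIntegral.integral_congr f5, lin_int, lin_int, lin_int, lin_int, lin_int]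
    field_simp; ring
  have hden : π * (1 + c^2) ≠ 0 := by positivity
  refine ⟨?_, by positivity, ?_⟩
  · rw [num, den, hc]
    have hK' : K ≠ 0 := ne_of_gt hK
    have h2 : ω^2 + K^2 ≠ 0 := by positivity
    field_simp
    ring
  · rw [div_le_one (by positivity)]
    nlinarith [sq_nonneg (ω - K)]
end

section
/- Let ξ > 1 and ρ = √(ξ² − 1). Then the function N(y, θ) = (1/2) ln( (y + (ξ−ρ)(θ−c))^{(ρ−ξ)/ρ} · (y + (ξ+ρ)(θ−c))^{(ρ+ξ)/ρ} ) is a first integral of the ODE dy/dθ = −2ξ − (θ−c)/y: along any solution y(θ) with y ≠ 0, θ ≠ c, and both arguments of the logarithm positive, d/dθ N(y(θ), θ) = 0. -/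
open Real

/-- For ξ > 1, N(y, θ) is a first integral of dy/dθ = -2ξ - (θ-c)/y. -/
theorem first_integral_node (c ξ ρ : ℝ) (hξ : 1 < ξ)
    (hρ : ρ = Real.sqrt (ξ^2 - 1)) (a b : ℝ) (y : ℝ → ℝ)
    (hy : ∀ θ ∈ Set.Ioo a b, HasDerivAt y (-2*ξ - (θ - c)/(y θ)) θ)
    (hy0 : ∀ θ ∈ Set.Ioo a b, y θ ≠ 0)
    (hc : ∀ θ ∈ Set.Ioo a b, θ ≠ c)
    (hpos1 : ∀ θ ∈ Set.Ioo a b, 0 < y θ + (ξ - ρ)*(θ - c))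
    (hpos2 : ∀ θ ∈ Set.Ioo a b, 0 < y θ + (ξ + ρ)*(θ - c)) :
    ∀ θ ∈ Set.Ioo a b,
      HasDerivAt (fun t =>
        (1/2) * Real.log ((y t + (ξ - ρ)*(t - c)) ^ ((ρ - ξ)/ρ)
          * (y t + (ξ + ρ)*(t - c)) ^ ((ρ + ξ)/ρ))) 0 θ := by
  have hξ2 : (0:ℝ) < ξ^2 - 1 := by nlinarith
  have hρpos : 0 < ρ := hρ ▸ Real.sqrt_pos.mpr hξ2
  have hρ2 : ρ^2 = ξ^2 - 1 := by
    rw [hρ, Real.sq_sqrt hξ2.le]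
  intro θ hθ
  have hmem : Set.Ioo a b ∈ nhds θ := (isOpen_Ioo).mem_nhds hθ
  have heq : (fun t =>
        (1/2) * Real.log ((y t + (ξ - ρ)*(t - c)) ^ ((ρ - ξ)/ρ)
          * (y t + (ξ + ρ)*(t - c)) ^ ((ρ + ξ)/ρ)))
      =ᶠ[nhds θ] (fun t =>
        (1/2) * (((ρ - ξ)/ρ) * Real.log (y t + (ξ - ρ)*(t - c))
          + ((ρ + ξ)/ρ) * Real.log (y t + (ξ + ρ)*(t - c)))) := by
    filter_upwards [hmem] with t ht
    have h1 := hpos1 t ht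
    have h2 := hpos2 t ht
    rw [Real.log_mul ((Real.rpow_pos_of_pos h1 _).ne') ((Real.rpow_pos_of_pos h2 _).ne'),
      Real.log_rpow h1, Real.log_rpow h2]
  have h1 := hpos1 θ hθ
  have h2 := hpos2 θ hθ
  have hy0' := hy0 θ hθ
  -- derivatives of the inner functions
  have hu : HasDerivAt (fun t => y t + (ξ - ρ)*(t - c))
      ((-2*ξ - (θ - c)/(y θ)) + (ξ - ρ)) θ := by
    have := (hy θ hθ).add (((hasDerivAt_id θ).sub_const c).const_mul (ξ - ρ))
    exact this.congr_deriv (by ring)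
  have hv : HasDerivAt (fun t => y t + (ξ + ρ)*(t - c))
      ((-2*ξ - (θ - c)/(y θ)) + (ξ + ρ)) θ := by
    have := (hy θ hθ).add (((hasDerivAt_id θ).sub_const c).const_mul (ξ + ρ))
    exact this.congr_deriv (by ring)
  have hlogu := hu.log h1.ne'
  have hlogv := hv.log h2.ne'
  have hD : HasDerivAt (fun t =>
        (1/2) * (((ρ - ξ)/ρ) * Real.log (y t + (ξ - ρ)*(t - c))
          + ((ρ + ξ)/ρ) * Real.log (y t + (ξ + ρ)*(t - c))))
      ((1/2) * (((ρ - ξ)/ρ) * (((-2*ξ - (θ - c)/(y θ)) + (ξ - ρ)) / (y θ + (ξ - ρ)*(θ - c)))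
        + ((ρ + ξ)/ρ) * (((-2*ξ - (θ - c)/(y θ)) + (ξ + ρ)) / (y θ + (ξ + ρ)*(θ - c))))) θ :=
    ((hlogu.const_mul ((ρ - ξ)/ρ)).add (hlogv.const_mul ((ρ + ξ)/ρ))).const_mul (1/2)
  have hzero : (1/2) * (((ρ - ξ)/ρ) * (((-2*ξ - (θ - c)/(y θ)) + (ξ - ρ)) / (y θ + (ξ - ρ)*(θ - c)))
        + ((ρ + ξ)/ρ) * (((-2*ξ - (θ - c)/(y θ)) + (ξ + ρ)) / (y θ + (ξ + ρ)*(θ - c)))) = 0 := by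
    have : y θ + (θ - c)*(ξ - ρ) ≠ 0 := by linarith
    have : y θ + (θ - c)*(ξ + ρ) ≠ 0 := by linarith
    have := hρpos.ne'
    field_simp
    linear_combination (-2*ρ*(θ-c)*(y θ)) * hρ2
  rw [hzero] at hD
  exact hD.congr_of_eventuallyEq heq
end

section
/- Let 0 < ξ < 1 and ρ = √(1 − ξ²). Then N(y, θ) = (1/2) ln( y² + 2ξy(θ−c) + (θ−c)² ) − (ξ/ρ) arctan( (y + ξ(θ−c)) / ((θ−c)ρ) ) is a first integral of the ODE dy/dθ = −2ξ − (θ−c)/y: along any solution with y ≠ 0 and θ ≠ c, d/dθ N(y(θ), θ) = 0. -/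
open Real

/-- For 0 < ξ < 1, N(y, θ) (involving log and arctan) is a first integral of
dy/dθ = -2ξ - (θ-c)/y. -/
theorem first_integral_focus (c ξ ρ : ℝ) (hξ0 : 0 < ξ) (hξ1 : ξ < 1)
    (hρ : ρ = Real.sqrt (1 - ξ^2)) (a b : ℝ) (y : ℝ → ℝ)
    (hy : ∀ θ ∈ Set.Ioo a b, HasDerivAt y (-2*ξ - (θ - c)/(y θ)) θ)
    (hy0 : ∀ θ ∈ Set.Ioo a b, y θ ≠ 0)
    (hc : ∀ θ ∈ Set.Ioo a b, θ ≠ c) :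
    ∀ θ ∈ Set.Ioo a b,
      HasDerivAt (fun t =>
        (1/2) * Real.log ((y t)^2 + 2*ξ*(y t)*(t - c) + (t - c)^2)
          - (ξ/ρ) * Real.arctan ((y t + ξ*(t - c)) / ((t - c)*ρ))) 0 θ := by
  intro θ hθ
  have hyd := hy θ hθ
  have hy0' := hy0 θ hθ
  have hd : θ - c ≠ 0 := sub_ne_zero.mpr (hc θ hθ)
  have h1ξ : (0:ℝ) < 1 - ξ^2 := by nlinarith
  have hρ0 : 0 < ρ := by rw [hρ]; exact Real.sqrt_pos.mpr h1ξ
  have hρ2 : ρ^2 = 1 - ξ^2 := by rw [hρ, sq_sqrt h1ξ.le]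
  have hQ : 0 < (y θ)^2 + 2*ξ*(y θ)*(θ - c) + (θ - c)^2 := by
    have h1 : (y θ + ξ*(θ-c))^2 + (1-ξ^2)*(θ-c)^2
        = (y θ)^2 + 2*ξ*(y θ)*(θ - c) + (θ - c)^2 := by ring
    have h2 : 0 < (1-ξ^2)*(θ-c)^2 :=
      mul_pos h1ξ (by positivity)
    nlinarith [sq_nonneg (y θ + ξ*(θ-c))]
  set y' : ℝ := -2*ξ - (θ - c)/(y θ) with hy'
  have hid : HasDerivAt (fun t : ℝ => t - c) 1 θ := (hasDerivAt_id θ).sub_const c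
  have hQ' : HasDerivAt (fun t => (y t)^2 + 2*ξ*(y t)*(t - c) + (t - c)^2)
      ((2 * y θ ^ 1 * y') + ((2*ξ*y') * (θ - c) + (2*ξ*y θ) * 1) + (2 * (θ-c)^1 * 1)) θ := by
    have h1 : HasDerivAt (fun t => (y t)^2) (2 * y θ ^ 1 * y') θ := hyd.pow 2
    have h2 : HasDerivAt (fun t => (2*ξ*y t) * (t - c))
        ((2*ξ*y') * (θ - c) + (2*ξ*y θ) * 1) θ := (hyd.const_mul (2*ξ)).mul hid
    have h3 : HasDerivAt (fun t => (t - c)^2) (2 * (θ-c)^1 * 1) θ := hid.pow 2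
    exact (h1.add h2).add h3
  have hlog := hQ'.log hQ.ne'
  have hden : HasDerivAt (fun t : ℝ => (t - c)*ρ) (1*ρ) θ := hid.mul_const ρ
  have hdρ : (θ - c)*ρ ≠ 0 := mul_ne_zero hd hρ0.ne'
  have hnum : HasDerivAt (fun t => y t + ξ*(t - c)) (y' + ξ*1) θ :=
    hyd.add (hid.const_mul ξ)
  have hA := hnum.div hden hdρ
  have harctan := hA.arctan
  have hfin := (hlog.const_mul (1/2:ℝ)).sub (harctan.const_mul (ξ/ρ))
  convert hfin using 1
  case e'_4 => rfl
  case e'_5 => rfl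
  case e'_8 => rfl
  set d := θ - c
  have hQne : (y θ)^2 + 2*ξ*(y θ)*d + d^2 ≠ 0 := hQ.ne'
  have hyval : y' = -2*ξ - d/(y θ) := rfl
  rw [hyval]
  have key : 1 + ((y θ + ξ*d)/(d*ρ))^2
      = ((y θ)^2 + 2*ξ*(y θ)*d + d^2) / (d^2*ρ^2) := by
    rw [div_pow, mul_pow, eq_div_iff (mul_ne_zero (pow_ne_zero 2 hd) (pow_ne_zero 2 hρ0.ne')),
      add_mul, div_mul_cancel₀ _ (mul_ne_zero (pow_ne_zero 2 hd) (pow_ne_zero 2 hρ0.ne'))]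
    linear_combination (d^2) * hρ2
  rw [show ((fun t => y t + ξ*(t - c)) / fun t => (t - c)*ρ) θ = (y θ + ξ*d)/(d*ρ) from rfl, key]
  field_simp
  ring
end

section
/- Let η ∈ ℝ and κ = √(η² + 1). Then M(y, θ) = (1/2) ln( (y + (θ+c)/(κ+η))^{(κ−η)/κ} · (y + (θ+c)/(η−κ))^{(κ+η)/κ} ) is a first integral of the ODE dy/dθ = 2η + (θ + c)/y: along any solution y(θ) with y ≠ 0, θ ≠ −c, and both arguments of the logarithm positive and well-defined, d/dθ M(y(θ), θ) = 0. -/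
open Real

/-- M(y, θ) is a first integral of dy/dθ = 2η + (θ+c)/y, where κ = √(η²+1). -/
theorem first_integral_saddle_domain (c η κ : ℝ)
    (hκ : κ = Real.sqrt (η^2 + 1)) (a b : ℝ) (y : ℝ → ℝ)
    (hy : ∀ θ ∈ Set.Ioo a b, HasDerivAt y (2*η + (θ + c)/(y θ)) θ)
    (hy0 : ∀ θ ∈ Set.Ioo a b, y θ ≠ 0)
    (hc : ∀ θ ∈ Set.Ioo a b, θ + c ≠ 0)
    (hpos1 : ∀ θ ∈ Set.Ioo a b, 0 < y θ + (θ + c)/(κ + η))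
    (hpos2 : ∀ θ ∈ Set.Ioo a b, 0 < y θ + (θ + c)/(η - κ)) :
    ∀ θ ∈ Set.Ioo a b,
      HasDerivAt (fun t =>
        (1/2) * Real.log ((y t + (t + c)/(κ + η)) ^ ((κ - η)/κ)
          * (y t + (t + c)/(η - κ)) ^ ((κ + η)/κ))) 0 θ := by
  have hκ2 : κ^2 = η^2 + 1 := by
    rw [hκ, Real.sq_sqrt]; positivity
  have hκpos : 0 < κ := by
    rw [hκ]; apply Real.sqrt_pos.mpr; positivity
  have hηκ : η < κ := by nlinarith [abs_nonneg η, sq_abs η, le_abs_self η]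
  have hηκ' : -κ < η := by nlinarith [neg_abs_le η, sq_abs η]
  have hkη : 0 < κ + η := by linarith
  have hkη' : 0 < κ - η := by linarith
  intro θ hθ
  have huθ := hpos1 θ hθ
  have hvθ := hpos2 θ hθ
  have hyθ := hy0 θ hθ
  -- derivatives of the inner functions
  have hu : HasDerivAt (fun t => y t + (t + c)/(κ + η))
      ((2*η + (θ + c)/(y θ)) + 1/(κ + η)) θ := by
    have h1 : HasDerivAt (fun t : ℝ => (t + c)/(κ + η)) (1/(κ + η)) θ := by
      simpa using ((hasDerivAt_id θ).add_const c).div_const (κ + η)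
    exact (hy θ hθ).add h1
  have hv : HasDerivAt (fun t => y t + (t + c)/(η - κ))
      ((2*η + (θ + c)/(y θ)) + 1/(η - κ)) θ := by
    have h1 : HasDerivAt (fun t : ℝ => (t + c)/(η - κ)) (1/(η - κ)) θ := by
      simpa using ((hasDerivAt_id θ).add_const c).div_const (η - κ)
    exact (hy θ hθ).add h1
  have hlu : HasDerivAt (fun t => Real.log (y t + (t + c)/(κ + η)))
      (((2*η + (θ + c)/(y θ)) + 1/(κ + η)) / (y θ + (θ + c)/(κ + η))) θ :=
    hu.log (ne_of_gt huθ)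
  have hlv : HasDerivAt (fun t => Real.log (y t + (t + c)/(η - κ)))
      (((2*η + (θ + c)/(y θ)) + 1/(η - κ)) / (y θ + (θ + c)/(η - κ))) θ :=
    hv.log (ne_of_gt hvθ)
  have hF : HasDerivAt (fun t =>
      (1/2) * (((κ - η)/κ) * Real.log (y t + (t + c)/(κ + η))
        + ((κ + η)/κ) * Real.log (y t + (t + c)/(η - κ))))
      ((1/2) * (((κ - η)/κ) * (((2*η + (θ + c)/(y θ)) + 1/(κ + η)) / (y θ + (θ + c)/(κ + η)))
        + ((κ + η)/κ) * (((2*η + (θ + c)/(y θ)) + 1/(η - κ)) / (y θ + (θ + c)/(η - κ))))) θ :=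
    ((hlu.const_mul ((κ - η)/κ)).add (hlv.const_mul ((κ + η)/κ))).const_mul (1/2)
  have e1 : (θ + c)/(κ + η) = (θ + c)*(κ - η) := by
    rw [div_eq_iff (ne_of_gt hkη)]; linear_combination (-(θ + c)) * hκ2
  have e2 : (θ + c)/(η - κ) = -((θ + c)*(κ + η)) := by
    rw [div_eq_iff (by linarith : η - κ ≠ 0)]; linear_combination (-(θ + c)) * hκ2
  have e3 : (1:ℝ)/(κ + η) = κ - η := by
    rw [div_eq_iff (ne_of_gt hkη)]; linear_combination -hκ2
  have e4 : (1:ℝ)/(η - κ) = -(κ + η) := by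
    rw [div_eq_iff (by linarith : η - κ ≠ 0)]; linear_combination -hκ2
  simp only [e1, e2, e3, e4] at hF huθ hvθ
  have hzero : (1/2) * (((κ - η)/κ) * (((2*η + (θ + c)/(y θ)) + (κ - η)) / (y θ + (θ + c)*(κ - η)))
        + ((κ + η)/κ) * (((2*η + (θ + c)/(y θ)) + -(κ + η)) / (y θ + -((θ + c)*(κ + η))))) = 0 := by
    have h1 : (y θ + (θ + c)*(κ - η)) ≠ 0 := ne_of_gt huθ
    have h2 : (y θ + -((θ + c)*(κ + η))) ≠ 0 := ne_of_gt hvθ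
    have h1' : y θ + (κ - η) * (θ + c) ≠ 0 := by rw [mul_comm]; exact h1
    field_simp
    ring_nf
    linear_combination (-2*κ*(θ+c)*(y θ)) * hκ2
  rw [hzero] at hF
  apply hF.congr_of_eventuallyEq
  filter_upwards [isOpen_Ioo.mem_nhds hθ] with t ht
  have h1 := hpos1 t ht
  have h2 := hpos2 t ht
  rw [Real.log_mul (by positivity) (by positivity), Real.log_rpow h1, Real.log_rpow h2]
end
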